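/- For a random variable R on [0,1] with CDF F, the function Q(b) = ∫_a^b (b-r)(r-a) dF(r) + ∫_b^c (c-r)(r-b) dF(r) (for fixed 0 ≤ a < c ≤ 1) is convex in b on [a,c], with second derivative (c-a)·p(b), where p is the density of R. -/

import Mathlib

open intervalIntegral

/-- FTC helper: derivative of `u ↦ ∫ r in a..u, g r` is `g b` for continuous `g`. -/
lemma ftc_helper (g : ℝ → ℝ) (hg : Continuous g) (a b : ℝ) :
    HasDerivAt (fun u => ∫ r in a..u, g r) (g b) b :=
  integral_hasDerivAt_right (hg.intervalIntegrable a b)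
    (hg.stronglyMeasurable.stronglyMeasurableAtFilter) hg.continuousAt

/-- For a random variable R on [0,1] with CDF F having continuous
density p = F', the function
Q(b) = ∫_a^b (b-r)(r-a) dF(r) + ∫_b^c (c-r)(r-b) dF(r)
(for fixed 0 ≤ a < c ≤ 1) is convex in b on [a,c], with second derivative
(c-a)·p(b). -/
theorem stmt0 (F p : ℝ → ℝ) (a c : ℝ) (ha : 0 ≤ a) (hac : a < c) (hc : c ≤ 1)
    (hF : ∀ x, HasDerivAt F (p x) x) (hpcont : Continuous p) (hp0 : ∀ x, 0 ≤ p x)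
    (Q : ℝ → ℝ)
    (hQ : ∀ b, Q b = (∫ r in a..b, (b - r) * (r - a) * p r) +
      ∫ r in b..c, (c - r) * (r - b) * p r) :
    ConvexOn ℝ (Set.Icc a c) Q ∧
      ∀ b ∈ Set.Ioo a c, deriv (deriv Q) b = (c - a) * p b := by
  -- the four auxiliary continuous integrands
  set gA : ℝ → ℝ := fun r => (r - a) * p r with hgA
  set gB : ℝ → ℝ := fun r => r * ((r - a) * p r) with hgB
  set gC : ℝ → ℝ := fun r => (c - r) * r * p r with hgC
  set gD : ℝ → ℝ := fun r => (c - r) * p r with hgD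
  have hAcont : Continuous gA := by fun_prop
  have hBcont : Continuous gB := by fun_prop
  have hCcont : Continuous gC := by fun_prop
  have hDcont : Continuous gD := by fun_prop
  -- rewrite Q algebraically
  have hQ2 : Q = fun b => b * (∫ r in a..b, gA r) - (∫ r in a..b, gB r)
      + ((∫ r in a..c, gC r) - ∫ r in a..b, gC r)
      - b * ((∫ r in a..c, gD r) - ∫ r in a..b, gD r) := by
    funext b
    rw [hQ b]
    have h1 : (∫ r in a..b, (b - r) * (r - a) * p r)
        = b * (∫ r in a..b, gA r) - ∫ r in a..b, gB r := by
      rw [← intervalIntegral.integral_const_mul, ← integral_sub (f := fun x => b * gA x)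
        ((continuous_const.mul hAcont).intervalIntegrable a b) (hBcont.intervalIntegrable a b)]
      apply integral_congr
      intro r _
      simp only [hgA, hgB]
      ring
    have h2 : (∫ r in b..c, (c - r) * (r - b) * p r)
        = (∫ r in b..c, gC r) - b * ∫ r in b..c, gD r := by
      rw [← intervalIntegral.integral_const_mul, ← integral_sub (g := fun x => b * gD x)
        (hCcont.intervalIntegrable b c) ((continuous_const.mul hDcont).intervalIntegrable b c)]
      apply integral_congr
      intro r _
      simp only [hgC, hgD]
      ring
    have h3 : (∫ r in b..c, gC r) = (∫ r in a..c, gC r) - ∫ r in a..b, gC r := by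
      rw [eq_sub_iff_add_eq, add_comm,
        integral_add_adjacent_intervals (hCcont.intervalIntegrable a b)
          (hCcont.intervalIntegrable b c)]
    have h4 : (∫ r in b..c, gD r) = (∫ r in a..c, gD r) - ∫ r in a..b, gD r := by
      rw [eq_sub_iff_add_eq, add_comm,
        integral_add_adjacent_intervals (hDcont.intervalIntegrable a b)
          (hDcont.intervalIntegrable b c)]
    rw [h1, h2, h3, h4]; ring
  -- first derivative
  set Q' : ℝ → ℝ := fun b => (∫ r in a..b, gA r) + (∫ r in a..b, gD r)
    - ∫ r in a..c, gD r with hQ'def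
  have hder1 : ∀ b, HasDerivAt Q (Q' b) b := by
    intro b
    rw [hQ2]
    have HA := ftc_helper gA hAcont a b
    have HB := ftc_helper gB hBcont a b
    have HC := ftc_helper gC hCcont a b
    have HD := ftc_helper gD hDcont a b
    have h := (((hasDerivAt_id b).mul HA).sub HB).add
      (((hasDerivAt_const b (∫ r in a..c, gC r)).sub HC)) |>.sub
      ((hasDerivAt_id b).mul ((hasDerivAt_const b (∫ r in a..c, gD r)).sub HD))
    refine h.congr_deriv ?_
    simp only [hQ'def, hgA, hgB, hgC, hgD, id_eq, Pi.sub_apply]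
    ring
  have hderivQ : deriv Q = Q' := funext fun b => (hder1 b).deriv
  -- second derivative
  have hder2 : ∀ b, HasDerivAt Q' ((c - a) * p b) b := by
    intro b
    have HA := ftc_helper gA hAcont a b
    have HD := ftc_helper gD hDcont a b
    have h := (HA.add HD).sub (hasDerivAt_const b (∫ r in a..c, gD r))
    refine h.congr_deriv ?_
    simp only [hgA, hgD]
    ring
  have hderiv2 : ∀ b, deriv (deriv Q) b = (c - a) * p b := by
    intro b
    rw [hderivQ]
    exact (hder2 b).deriv
  constructor
  · apply convexOn_of_deriv2_nonneg' (convex_Icc a c)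
    · intro x _
      exact (hder1 x).differentiableAt.differentiableWithinAt
    · intro x _
      rw [hderivQ]
      exact (hder2 x).differentiableAt.differentiableWithinAt
    · intro x _
      have : deriv^[2] Q x = (c - a) * p x := by
        simp only [Function.iterate_succ, Function.iterate_zero, Function.comp_apply, id_eq]
        exact hderiv2 x
      rw [this]
      exact mul_nonneg (by linarith) (hp0 x)
  · intro b _
    exact hderiv2 b
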